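/- Let k be a field and let f_1, ..., f_n be nonzero linear forms in variables s_1, ..., s_d over k that span pairwise distinct lines in the polynomial ring k[s_1,...,s_d]. Then the rational functions 1/f_1, ..., 1/f_n are linearly independent over k. -/

import Mathlib

open MvPolynomial

section Aux

variable {σ R : Type*}

private lemma hc_top_ne_zero [CommSemiring R] {p : MvPolynomial σ R} (hp : p ≠ 0) :
    homogeneousComponent p.totalDegree p ≠ 0 := by
  obtain ⟨d, hd, hdeg⟩ := Finset.exists_mem_eq_sup p.support (support_nonempty.mpr hp)
      (fun m => m.sum fun _ e => e)
  have hdd : d.degree = p.totalDegree := by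
    rw [totalDegree, hdeg]
    simp [Finsupp.degree, Finsupp.sum]
    rfl
  intro h
  have hcoeff := coeff_homogeneousComponent (n := p.totalDegree) (φ := p) d
  rw [h, coeff_zero, if_pos hdd] at hcoeff
  exact (mem_support_iff.mp hd) hcoeff.symm

private lemma td_mul [CommRing R] [IsDomain R] {p q : MvPolynomial σ R}
    (hp : p ≠ 0) (hq : q ≠ 0) :
    (p * q).totalDegree = p.totalDegree + q.totalDegree := by
  set m := p.totalDegree with hm
  set nn := q.totalDegree with hnn
  refine le_antisymm (totalDegree_mul p q) (le_of_not_gt fun h => ?_)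
  have hmn : ∀ i j : ℕ, homogeneousComponent (m + nn)
      (homogeneousComponent i p * homogeneousComponent j q) =
      if m + nn = i + j then
        homogeneousComponent i p * homogeneousComponent j q else 0 := fun i j =>
    homogeneousComponent_of_mem ((mem_homogeneousSubmodule _ _).mpr
      ((homogeneousComponent_isHomogeneous i p).mul (homogeneousComponent_isHomogeneous j q)))
  have key : homogeneousComponent (m + nn) (p * q) =
      homogeneousComponent m p * homogeneousComponent nn q := by
    conv_lhs => rw [← sum_homogeneousComponent p, ← sum_homogeneousComponent q, hm, hnn]
    rw [Finset.sum_mul_sum, map_sum]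
    rw [Finset.sum_eq_single m]
    · rw [map_sum, Finset.sum_eq_single nn]
      · rw [hmn, if_pos rfl]
      · intro j hj hjne
        rw [hmn, if_neg]
        have : j ≤ nn := Nat.lt_succ_iff.mp (Finset.mem_range.mp hj)
        omega
      · intro hn
        exact absurd (Finset.mem_range.mpr (Nat.lt_succ_self _)) hn
    · intro i hi hine
      rw [map_sum]
      apply Finset.sum_eq_zero
      intro j hj
      rw [hmn, if_neg]
      have h1 : i ≤ m := Nat.lt_succ_iff.mp (Finset.mem_range.mp hi)
      have h2 : j ≤ nn := Nat.lt_succ_iff.mp (Finset.mem_range.mp hj)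
      omega
    · intro hn
      exact absurd (Finset.mem_range.mpr (Nat.lt_succ_self _)) hn
  have h2 := homogeneousComponent_eq_zero (n := m + nn) (φ := p * q) h
  rw [key] at h2
  exact mul_ne_zero (hc_top_ne_zero hp) (hc_top_ne_zero hq) h2

private lemma eq_C_of_td_zero [CommSemiring R] {p : MvPolynomial σ R}
    (h : p.totalDegree = 0) : p = C (coeff 0 p) := by
  have hp : p.IsHomogeneous 0 := (totalDegree_zero_iff_isHomogeneous (σ := σ) (R := R)).mp h
  have h0 := homogeneousComponent_of_mem (m := 0) ((mem_homogeneousSubmodule _ _).mpr hp)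
  rw [if_pos rfl] at h0
  exact h0.symm.trans (homogeneousComponent_zero p)

private lemma irred_of_linear {K : Type*} [Field K] {σ : Type*} {p : MvPolynomial σ K}
    (h1 : p.IsHomogeneous 1) (h0 : p ≠ 0) : Irreducible p := by
  have htd : p.totalDegree = 1 := h1.totalDegree h0
  constructor
  · intro hu
    obtain ⟨u, hu'⟩ := hu.exists_right_inv
    have hu0 : u ≠ 0 := by
      rintro rfl
      rw [mul_zero] at hu'
      exact one_ne_zero hu'.symm
    have := td_mul h0 hu0
    rw [hu', totalDegree_one, htd] at this
    omega
  · intro a b hab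
    have ha : a ≠ 0 := fun h => h0 (by rw [hab, h, zero_mul])
    have hb : b ≠ 0 := fun h => h0 (by rw [hab, h, mul_zero])
    have hsum : a.totalDegree + b.totalDegree = 1 := by
      rw [← td_mul ha hb, ← hab, htd]
    rcases Nat.add_eq_one_iff.mp hsum with ⟨h, _⟩ | ⟨_, h⟩
    · left
      have hc : coeff 0 a ≠ 0 := fun hc => ha (by rw [eq_C_of_td_zero h, hc, map_zero])
      rw [eq_C_of_td_zero h]
      exact hc.isUnit.map C
    · right
      have hc : coeff 0 b ≠ 0 := fun hc => hb (by rw [eq_C_of_td_zero h, hc, map_zero])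
      rw [eq_C_of_td_zero h]
      exact hc.isUnit.map C

end Aux

/-- Nonzero linear forms spanning pairwise distinct lines have linearly
independent reciprocals in the field of rational functions. -/
theorem reciprocals_of_linear_forms_linearIndependent
    (K : Type*) [Field K] (d n : ℕ)
    (f : Fin n → MvPolynomial (Fin d) K)
    (hhom : ∀ i, (f i).IsHomogeneous 1)
    (hne : ∀ i, f i ≠ 0)
    (hlines : ∀ i j, i ≠ j → ∀ c : K, f i ≠ c • f j) :
    LinearIndependent K
      (fun i => (algebraMap (MvPolynomial (Fin d) K)
        (FractionRing (MvPolynomial (Fin d) K)) (f i))⁻¹) := by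
  let R := MvPolynomial (Fin d) K
  let F := FractionRing R
  have halg : Function.Injective (algebraMap R F) := IsFractionRing.injective R F
  have hne' : ∀ j, algebraMap R F (f j) ≠ 0 := fun j h =>
    hne j (halg (by rw [h, map_zero]))
  rw [linearIndependent_iff']
  intro s g hsum i hi
  by_contra hgi
  -- clear denominators
  have key : (∑ j ∈ s, g j • ∏ l ∈ s.erase j, f l : R) = 0 := by
    apply halg
    rw [map_zero, map_sum]
    have hmul := congrArg (fun x => (algebraMap R F (∏ l ∈ s, f l)) * x) hsum
    simp only [mul_zero, Finset.mul_sum] at hmul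
    rw [← hmul]
    refine Finset.sum_congr rfl fun j hj => ?_
    rw [smul_eq_C_mul, map_mul, ← Finset.mul_prod_erase s f hj, map_mul,
      Algebra.smul_def, IsScalarTower.algebraMap_apply K R F, MvPolynomial.algebraMap_eq]
    field_simp
    rw [mul_div_assoc', eq_div_iff (hne' j)]
    ring
  have hprime : Prime (f i) :=
    (UniqueFactorizationMonoid.irreducible_iff_prime).mp (irred_of_linear (hhom i) (hne i))
  have hdvd : f i ∣ g i • ∏ l ∈ s.erase i, f l := by
    rw [← Finset.add_sum_erase s _ hi] at key
    rw [eq_neg_of_add_eq_zero_left key]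
    refine (Finset.dvd_sum fun j hj => ?_).neg_right
    have hji : j ≠ i := Finset.ne_of_mem_erase hj
    have hmem : i ∈ s.erase j := Finset.mem_erase.mpr ⟨hji.symm, hi⟩
    rw [smul_eq_C_mul]
    exact (Finset.dvd_prod_of_mem f hmem).mul_left _
  rw [smul_eq_C_mul] at hdvd
  rcases hprime.2.2 _ _ hdvd with hdC | hdP
  · exact hprime.not_unit (isUnit_of_dvd_unit hdC ((Ne.isUnit hgi).map C))
  · obtain ⟨l, hl, hdl⟩ := hprime.exists_mem_finset_dvd hdP
    have hli : l ≠ i := Finset.ne_of_mem_erase hl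
    obtain ⟨q, hq⟩ := hdl
    have hq0 : q ≠ 0 := fun h => hne l (by rw [hq, h, mul_zero])
    have htdq : q.totalDegree = 0 := by
      have := td_mul (hne i) hq0
      rw [← hq, (hhom l).totalDegree (hne l), (hhom i).totalDegree (hne i)] at this
      omega
    refine hlines l i hli (coeff 0 q) ?_
    rw [hq, smul_eq_C_mul, mul_comm]
    congr 1
    exact eq_C_of_td_zero htdq
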